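/- Let Γ be closed under par-substitutions (substitutions mapping every variable to a parameter) and suppose A ∈ Γ; further assume par is infinite. Then the following are equivalent: (1) ⊢ᵢ A → B; (2) A is Γ-admissible to B (for every variable-free E ∈ Γ and substitution θ, ⊢ᵢ E → θ(A) implies ⊢ᵢ E → θ(B)); (3) A Γ-projectively preserves B (for every Γ-projective formula F, ⊢ᵢ F → A implies ⊢ᵢ F → B). -/

import Mathlib

inductive Form (var par : Type) : Type where
  | bot : Form var par
  | v : var → Form var par
  | p : par → Form var par
  | and : Form var par → Form var par → Form var par
  | or : Form var par → Form var par → Form var par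
  | imp : Form var par → Form var par → Form var par

namespace Form
variable {var par : Type}

def neg (A : Form var par) : Form var par := A.imp .bot
def top : Form var par := Form.neg .bot
def fiff (A B : Form var par) : Form var par := (A.imp B).and (B.imp A)

/-- `varFree A`: `A` contains no variables (it lies in the parameter-only sublanguage). -/
def varFree : Form var par → Prop
  | .bot => True
  | .v _ => False
  | .p _ => True
  | .and A B => varFree A ∧ varFree B
  | .or A B => varFree A ∧ varFree B
  | .imp A B => varFree A ∧ varFree B

/-- Substitutions act on variables, fix parameters, and commute with connectives. -/
def subst (θ : var → Form var par) : Form var par → Form var par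
  | .bot => .bot
  | .v x => θ x
  | .p q => .p q
  | .and A B => (subst θ A).and (subst θ B)
  | .or A B => (subst θ A).or (subst θ B)
  | .imp A B => (subst θ A).imp (subst θ B)

end Form

/-- Hilbert-style provability: `cl = false` is intuitionistic logic (IPC),
`cl = true` is classical logic (CPC). -/
inductive Prv {var par : Type} (cl : Bool) : Form var par → Prop where
  | mp {A B : Form var par} : Prv cl (A.imp B) → Prv cl A → Prv cl B
  | k {A B : Form var par} : Prv cl (A.imp (B.imp A))
  | s {A B C : Form var par} :
      Prv cl ((A.imp (B.imp C)).imp ((A.imp B).imp (A.imp C)))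
  | andI {A B : Form var par} : Prv cl (A.imp (B.imp (A.and B)))
  | andE1 {A B : Form var par} : Prv cl ((A.and B).imp A)
  | andE2 {A B : Form var par} : Prv cl ((A.and B).imp B)
  | orI1 {A B : Form var par} : Prv cl (A.imp (A.or B))
  | orI2 {A B : Form var par} : Prv cl (B.imp (A.or B))
  | orE {A B C : Form var par} :
      Prv cl ((A.imp C).imp ((B.imp C).imp ((A.or B).imp C)))
  | exf {A : Form var par} : Prv cl (Form.bot.imp A)
  | dne {A : Form var par} : cl = true → Prv cl (A.neg.neg.imp A)

/-- `U` is the uniform post-interpolant of `A` with respect to the parameters. -/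
def IsUPI {var par : Type} (cl : Bool) (A U : Form var par) : Prop :=
  U.varFree ∧ Prv cl (A.imp U) ∧
    ∀ C : Form var par, C.varFree → Prv cl (A.imp C) → Prv cl (U.imp C)

/-- `F` is `Γ`-projective. -/
def GammaProjective {var par : Type} (Γ : Set (Form var par)) (F : Form var par) : Prop :=
  ∃ (θ : var → Form var par) (E : Form var par), E ∈ Γ ∧ E.varFree ∧
    (∀ x : var, Prv false (F.imp ((θ x).fiff (Form.v x)))) ∧
    Prv false ((Form.subst θ F).fiff E)

namespace GammaAux
open Form

variable {var par : Type} {cl : Bool}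

def vars : Form var par → List var
  | .bot => [] | .v x => [x] | .p _ => []
  | .and A B => vars A ++ vars B
  | .or A B => vars A ++ vars B
  | .imp A B => vars A ++ vars B

def pars : Form var par → List par
  | .bot => [] | .v _ => [] | .p q => [q]
  | .and A B => pars A ++ pars B
  | .or A B => pars A ++ pars B
  | .imp A B => pars A ++ pars B

def psubst (σ : par → Form var par) : Form var par → Form var par
  | .bot => .bot
  | .v x => .v x
  | .p q => σ q
  | .and A B => (psubst σ A).and (psubst σ B)
  | .or A B => (psubst σ A).or (psubst σ B)
  | .imp A B => (psubst σ A).imp (psubst σ B)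

lemma prv_id (A : Form var par) : Prv cl (A.imp A) :=
  Prv.mp (Prv.mp (Prv.s (B := A.imp A)) Prv.k) Prv.k

lemma prv_const {A B : Form var par} (h : Prv cl B) : Prv cl (A.imp B) :=
  Prv.mp Prv.k h

lemma prv_trans {A B C : Form var par} (h1 : Prv cl (A.imp B))
    (h2 : Prv cl (B.imp C)) : Prv cl (A.imp C) :=
  Prv.mp (Prv.mp Prv.s (Prv.mp Prv.k h2)) h1

lemma prv_and_intro {A B C : Form var par} (h1 : Prv cl (A.imp B))
    (h2 : Prv cl (A.imp C)) : Prv cl (A.imp (B.and C)) :=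
  Prv.mp (Prv.mp Prv.s (prv_trans h1 Prv.andI)) h2

lemma prv_pair {A B : Form var par} (h1 : Prv cl A) (h2 : Prv cl B) :
    Prv cl (A.and B) := Prv.mp (Prv.mp Prv.andI h1) h2

lemma prv_iff_refl (A : Form var par) : Prv cl (A.fiff A) :=
  prv_pair (prv_id A) (prv_id A)

lemma prv_top : Prv cl (Form.top : Form var par) := prv_id Form.bot

lemma subst_prv (θ : var → Form var par) {A : Form var par} (h : Prv cl A) :
    Prv cl (Form.subst θ A) := by
  induction h with
  | mp _ _ ih1 ih2 => exact Prv.mp ih1 ih2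
  | k => exact Prv.k
  | s => exact Prv.s
  | andI => exact Prv.andI
  | andE1 => exact Prv.andE1
  | andE2 => exact Prv.andE2
  | orI1 => exact Prv.orI1
  | orI2 => exact Prv.orI2
  | orE => exact Prv.orE
  | exf => exact Prv.exf
  | dne h => exact Prv.dne h

lemma psubst_prv (σ : par → Form var par) {A : Form var par} (h : Prv cl A) :
    Prv cl (psubst σ A) := by
  induction h with
  | mp _ _ ih1 ih2 => exact Prv.mp ih1 ih2
  | k => exact Prv.k
  | s => exact Prv.s
  | andI => exact Prv.andI
  | andE1 => exact Prv.andE1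
  | andE2 => exact Prv.andE2
  | orI1 => exact Prv.orI1
  | orI2 => exact Prv.orI2
  | orE => exact Prv.orE
  | exf => exact Prv.exf
  | dne h => exact Prv.dne h

lemma subst_varFree (θ : var → Form var par) (hθ : ∀ x, ∃ q, θ x = Form.p q)
    (A : Form var par) : (Form.subst θ A).varFree := by
  induction A with
  | bot => trivial
  | v x => obtain ⟨q, hq⟩ := hθ x; simp [Form.subst, hq, Form.varFree]
  | p q => trivial
  | and A B ihA ihB => exact ⟨ihA, ihB⟩
  | or A B ihA ihB => exact ⟨ihA, ihB⟩
  | imp A B ihA ihB => exact ⟨ihA, ihB⟩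

lemma subst_congr {θ θ' : var → Form var par} (A : Form var par)
    (h : ∀ x ∈ vars A, θ x = θ' x) : Form.subst θ A = Form.subst θ' A := by
  induction A with
  | bot => rfl
  | v x => exact h x (by simp [vars])
  | p q => rfl
  | and A B ihA ihB =>
      simp only [Form.subst]
      rw [ihA (fun x hx => h x (by simp [vars, hx])),
          ihB (fun x hx => h x (by simp [vars, hx]))]
  | or A B ihA ihB =>
      simp only [Form.subst]
      rw [ihA (fun x hx => h x (by simp [vars, hx])),
          ihB (fun x hx => h x (by simp [vars, hx]))]
  | imp A B ihA ihB =>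
      simp only [Form.subst]
      rw [ihA (fun x hx => h x (by simp [vars, hx])),
          ihB (fun x hx => h x (by simp [vars, hx]))]

lemma psubst_fix {σ : par → Form var par} (A : Form var par)
    (h : ∀ q ∈ pars A, σ q = Form.p q) : psubst σ A = A := by
  induction A with
  | bot => rfl
  | v x => rfl
  | p q => exact h q (by simp [pars])
  | and A B ihA ihB =>
      simp only [psubst]
      rw [ihA (fun q hq => h q (by simp [pars, hq])),
          ihB (fun q hq => h q (by simp [pars, hq]))]
  | or A B ihA ihB =>
      simp only [psubst]
      rw [ihA (fun q hq => h q (by simp [pars, hq])),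
          ihB (fun q hq => h q (by simp [pars, hq]))]
  | imp A B ihA ihB =>
      simp only [psubst]
      rw [ihA (fun q hq => h q (by simp [pars, hq])),
          ihB (fun q hq => h q (by simp [pars, hq]))]

lemma psubst_subst {σ : par → Form var par} {θ : var → Form var par}
    (A : Form var par)
    (hv : ∀ x ∈ vars A, psubst σ (θ x) = Form.v x)
    (hp : ∀ q ∈ pars A, σ q = Form.p q) :
    psubst σ (Form.subst θ A) = A := by
  induction A with
  | bot => rfl
  | v x => exact hv x (by simp [vars])
  | p q => exact hp q (by simp [pars])
  | and A B ihA ihB =>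
      simp only [Form.subst, psubst]
      rw [ihA (fun x hx => hv x (by simp [vars, hx])) (fun q hq => hp q (by simp [pars, hq])),
          ihB (fun x hx => hv x (by simp [vars, hx])) (fun q hq => hp q (by simp [pars, hq]))]
  | or A B ihA ihB =>
      simp only [Form.subst, psubst]
      rw [ihA (fun x hx => hv x (by simp [vars, hx])) (fun q hq => hp q (by simp [pars, hq])),
          ihB (fun x hx => hv x (by simp [vars, hx])) (fun q hq => hp q (by simp [pars, hq]))]
  | imp A B ihA ihB =>
      simp only [Form.subst, psubst]
      rw [ihA (fun x hx => hv x (by simp [vars, hx])) (fun q hq => hp q (by simp [pars, hq])),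
          ihB (fun x hx => hv x (by simp [vars, hx])) (fun q hq => hp q (by simp [pars, hq]))]

def conjMap (f : var → Form var par) : List var → Form var par
  | [] => Form.top
  | x :: L => (f x).and (conjMap f L)

lemma conjMap_prv {f : var → Form var par} {L : List var}
    (h : ∀ x ∈ L, Prv cl (f x)) : Prv cl (conjMap f L) := by
  induction L with
  | nil => exact prv_top
  | cons a L ih =>
      exact prv_pair (h a (by simp)) (ih (fun x hx => h x (by simp [hx])))

lemma conjMap_elem {f : var → Form var par} {L : List var} {x : var}
    (hx : x ∈ L) : Prv cl ((conjMap f L).imp (f x)) := by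
  induction L with
  | nil => simp at hx
  | cons a L ih =>
      rcases List.mem_cons.mp hx with h | h
      · subst h; exact Prv.andE1
      · exact prv_trans Prv.andE2 (ih h)

lemma subst_conjMap (θ : var → Form var par) (f : var → Form var par)
    (L : List var) :
    Form.subst θ (conjMap f L) = conjMap (fun x => Form.subst θ (f x)) L := by
  induction L with
  | nil => rfl
  | cons a L ih => simp only [conjMap, Form.subst]; rw [ih]

lemma psubst_conjMap (σ : par → Form var par) (f : var → Form var par)
    (L : List var) :
    psubst σ (conjMap f L) = conjMap (fun x => psubst σ (f x)) L := by
  induction L with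
  | nil => rfl
  | cons a L ih => simp only [conjMap, psubst]; rw [ih]

lemma exists_fresh [Infinite par] (G : Form var par) :
    ∃ (θ' : var → Form var par) (σ : par → Form var par),
      (∀ x, ∃ q, θ' x = Form.p q) ∧
      (∀ x ∈ vars G, psubst σ (θ' x) = Form.v x) ∧
      (∀ q ∈ pars G, σ q = Form.p q) := by
  classical
  set L := vars G with hL
  set P := pars G with hP
  have hinf : ((P.toFinset : Set par)ᶜ).Infinite :=
    P.toFinset.finite_toSet.infinite_compl
  haveI := hinf.to_subtype
  let e : ℕ ↪ ((P.toFinset : Set par)ᶜ : Set par) := Infinite.natEmbedding _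
  let f : ℕ → par := fun n => (e n : par)
  have hfinj : Function.Injective f := fun a b hab => e.injective (Subtype.ext hab)
  have hfP : ∀ n, f n ∉ P := fun n hn => (e n).2 (by simpa using hn)
  refine ⟨fun x => Form.p (f (if x ∈ L then L.idxOf x + 1 else 0)),
    fun q => if h : ∃ n : ℕ, n < L.length ∧ f (n + 1) = q then
      Form.v (L.get ⟨h.choose, h.choose_spec.1⟩) else Form.p q, ?_, ?_, ?_⟩
  · intro x; exact ⟨_, rfl⟩
  · intro x hx
    have hlt : L.idxOf x < L.length := List.idxOf_lt_length_iff.mpr hx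
    simp only [psubst, hx, if_pos]
    have hex : ∃ n : ℕ, n < L.length ∧ f (n + 1) = f (L.idxOf x + 1) :=
      ⟨L.idxOf x, hlt, rfl⟩
    rw [dif_pos hex]
    have h1 : hex.choose + 1 = L.idxOf x + 1 := hfinj hex.choose_spec.2
    have h2 : hex.choose = L.idxOf x := by omega
    congr 1
    have : L.get ⟨hex.choose, hex.choose_spec.1⟩ = L.get ⟨L.idxOf x, hlt⟩ := by
      congr 1
      exact Fin.ext h2
    rw [this]
    exact List.idxOf_get hlt
  · intro q hq
    dsimp only
    rw [dif_neg]
    rintro ⟨n, -, rfl⟩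
    exact hfP (n + 1) hq


lemma adm_to_prv [Infinite par] {Γ : Set (Form var par)}
    (hcl : ∀ A ∈ Γ, ∀ θ : var → Form var par,
      (∀ x : var, ∃ q : par, θ x = Form.p q) → Form.subst θ A ∈ Γ)
    {A B : Form var par} (hA : A ∈ Γ)
    (h2 : ∀ E ∈ Γ, E.varFree → ∀ θ : var → Form var par,
      Prv false (E.imp (Form.subst θ A)) → Prv false (E.imp (Form.subst θ B))) :
    Prv false (A.imp B) := by
  obtain ⟨θ', σ, ha, hb, hc⟩ := exists_fresh (A.imp B)
  have h1 : Prv false ((Form.subst θ' A).imp (Form.subst θ' B)) :=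
    h2 _ (hcl A hA θ' ha) (subst_varFree θ' ha A) θ' (prv_id _)
  have h3 : Prv false (psubst σ ((Form.subst θ' A).imp (Form.subst θ' B))) :=
    psubst_prv σ h1
  have heq : psubst σ ((Form.subst θ' A).imp (Form.subst θ' B)) = A.imp B :=
    psubst_subst (A.imp B) hb hc
  rwa [heq] at h3

lemma proj_to_prv [Infinite par] {Γ : Set (Form var par)}
    (hcl : ∀ A ∈ Γ, ∀ θ : var → Form var par,
      (∀ x : var, ∃ q : par, θ x = Form.p q) → Form.subst θ A ∈ Γ)
    {A B : Form var par} (hA : A ∈ Γ)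
    (h3 : ∀ F : Form var par, GammaProjective Γ F →
      Prv false (F.imp A) → Prv false (F.imp B)) :
    Prv false (A.imp B) := by
  classical
  obtain ⟨θ', σ, ha, hb, hc⟩ := exists_fresh (A.imp B)
  set L : List var := vars (A.imp B) with hLdef
  set Cf : var → Form var par := fun y => (θ' y).fiff (Form.v y) with hCf
  set F : Form var par := A.and (conjMap Cf L) with hF
  set fθ : var → Form var par := fun x => if x ∈ L then θ' x else Form.v x with hfθ
  have hvarsA : ∀ x ∈ vars A, x ∈ L := by
    intro x hx; rw [hLdef]; simp [vars, hx]
  have hEΓ : Form.subst θ' A ∈ Γ := hcl A hA θ' ha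
  have hEvf : (Form.subst θ' A).varFree := subst_varFree θ' ha A
  -- projectivity conditions
  have key : ∀ x : var, Prv false (F.imp ((fθ x).fiff (Form.v x))) := by
    intro x
    by_cases hx : x ∈ L
    · have e1 : fθ x = θ' x := by rw [hfθ]; exact if_pos hx
      rw [e1]
      have h1 : Prv false ((conjMap Cf L).imp (Cf x)) := conjMap_elem hx
      rw [hCf] at h1
      exact prv_trans Prv.andE2 h1
    · have e1 : fθ x = Form.v x := by rw [hfθ]; exact if_neg hx
      rw [e1]
      exact prv_const (prv_iff_refl _)
  have hsA : Form.subst fθ A = Form.subst θ' A := by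
    refine subst_congr A (fun x hx => ?_)
    rw [hfθ]; exact if_pos (hvarsA x hx)
  have hD : Prv false (Form.subst fθ (conjMap Cf L)) := by
    rw [subst_conjMap]
    refine conjMap_prv (fun x hx => ?_)
    show Prv false ((Form.subst fθ (θ' x)).fiff (fθ x))
    obtain ⟨q, hq⟩ := ha x
    have e1 : Form.subst fθ (θ' x) = θ' x := by rw [hq]; rfl
    have e2 : fθ x = θ' x := by rw [hfθ]; exact if_pos hx
    rw [e1, e2]
    exact prv_iff_refl _
  have hfiff : Prv false ((Form.subst fθ F).fiff (Form.subst θ' A)) := by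
    show Prv false (((Form.subst fθ A).and
      (Form.subst fθ (conjMap Cf L))).fiff (Form.subst θ' A))
    rw [hsA]
    exact prv_pair Prv.andE1 (prv_and_intro (prv_id _) (prv_const hD))
  have hproj : GammaProjective Γ F := ⟨fθ, Form.subst θ' A, hEΓ, hEvf, key, hfiff⟩
  have hFB : Prv false (F.imp B) := h3 F hproj Prv.andE1
  -- pull back along σ
  have e3 : psubst σ A = A :=
    psubst_fix A (fun q hq => hc q (by rw [hLdef] at *; simp [pars, hq]))
  have e4 : psubst σ B = B :=
    psubst_fix B (fun q hq => hc q (by simp [pars, hq]))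
  have hC' : Prv false (psubst σ (conjMap Cf L)) := by
    rw [psubst_conjMap]
    refine conjMap_prv (fun x hx => ?_)
    show Prv false ((psubst σ (θ' x)).fiff (Form.v x))
    rw [hCf] at *
    rw [hb x hx]
    exact prv_iff_refl _
  have h5 : Prv false ((A.and (psubst σ (conjMap Cf L))).imp B) := by
    have h4 : Prv false (psubst σ (F.imp B)) := psubst_prv σ hFB
    have e : psubst σ (F.imp B) = (A.and (psubst σ (conjMap Cf L))).imp B := by
      show ((psubst σ A).and (psubst σ (conjMap Cf L))).imp (psubst σ B) = _
      rw [e3, e4]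
    rwa [e] at h4
  exact prv_trans (prv_and_intro (prv_id A) (prv_const hC')) h5

end GammaAux

/-- For `Γ` closed under par-substitutions and `A ∈ Γ`:
derivability, `Γ`-admissibility and projective-`Γ` preservativity coincide. -/
theorem gamma_admissibility_characterisation {var par : Type} [Infinite var] [Infinite par]
    (Γ : Set (Form var par))
    (hcl : ∀ A ∈ Γ, ∀ θ : var → Form var par,
      (∀ x : var, ∃ q : par, θ x = Form.p q) → Form.subst θ A ∈ Γ)
    (A B : Form var par) (hA : A ∈ Γ) :
    (Prv false (A.imp B) ↔
      (∀ E ∈ Γ, E.varFree → ∀ θ : var → Form var par,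
        Prv false (E.imp (Form.subst θ A)) → Prv false (E.imp (Form.subst θ B)))) ∧
    (Prv false (A.imp B) ↔
      (∀ F : Form var par, GammaProjective Γ F →
        Prv false (F.imp A) → Prv false (F.imp B))) := by
  refine ⟨⟨fun h E _ _ θ hEA => GammaAux.prv_trans hEA (GammaAux.subst_prv θ h),
    fun h2 => GammaAux.adm_to_prv hcl hA h2⟩,
    ⟨fun h F _ hFA => GammaAux.prv_trans hFA h,
    fun h3 => GammaAux.proj_to_prv hcl hA h3⟩⟩
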